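/- arXiv:2512.19303 — 2 statements merged into one kernel-verified Lean document; each statement's English description precedes it below -/
import Mathlib

section
/- (Proposition 5.1, part 1.) Let n ≥ 1 and let g = [[A, b], [cᵀ, d]] be an invertible real (n+1)×(n+1) matrix in block form with c ≠ 0. Then there exist u, v ∈ ℝⁿ, an invertible n×n real matrix A₁, a vector b₁ ∈ ℝⁿ, and a real number d₁ > 0 such that g = [[Iₙ + uvᵀ, u], [vᵀ, 1]] · [[A₁, b₁], [0, d₁]]. -/
open Matrix

/-- The block matrix `[[A, b], [cᵀ, d]]` of size `(n+1) × (n+1)`. -/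
def blockMat {n : ℕ} (A : Matrix (Fin n) (Fin n) ℝ) (b c : Fin n → ℝ) (d : ℝ) :
    Matrix (Fin n ⊕ Unit) (Fin n ⊕ Unit) ℝ :=
  Matrix.fromBlocks A (fun i _ => b i) (fun _ j => c j) (fun _ _ => d)

lemma blockMat_eq_fromBlocks {n : ℕ} (A : Matrix (Fin n) (Fin n) ℝ) (b c : Fin n → ℝ) (d : ℝ) :
    blockMat A b c d = fromBlocks A (replicateCol Unit b) (replicateRow Unit c) (d • (1 : Matrix Unit Unit ℝ)) := by
  unfold blockMat
  ext i j
  cases i <;> cases j <;> simp [fromBlocks, replicateCol, replicateRow, one_apply]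

lemma blockMat_mul {n : ℕ} (X X' : Matrix (Fin n) (Fin n) ℝ) (p q p' q' : Fin n → ℝ) (e e' : ℝ) :
    blockMat X p q e * blockMat X' p' q' e' =
      blockMat (X * X' + vecMulVec p q') (X.mulVec p' + e' • p) (X'.vecMul q + e • q')
        (q ⬝ᵥ p' + e * e') := by
  unfold blockMat
  erw [fromBlocks_multiply]
  ext i j
  cases i <;> cases j <;>
    simp [fromBlocks, mul_apply, vecMulVec_apply, mulVec, vecMul, dotProduct, mul_comm] <;>
    erw [mul_apply] <;> try erw [mul_apply]
  all_goals simp [vecMulVec_apply, mulVec, vecMul, dotProduct, mul_comm]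

lemma vecMulVec_mul' {n : ℕ} (u v : Fin n → ℝ) (M : Matrix (Fin n) (Fin n) ℝ) :
    vecMulVec u v * M = vecMulVec u (v ᵥ* M) := by
  ext i j
  simp [mul_apply, vecMulVec_apply, vecMul, dotProduct, Finset.mul_sum, mul_assoc]

lemma vecMulVec_mulVec' {n : ℕ} (u v w : Fin n → ℝ) :
    (vecMulVec u v) *ᵥ w = (v ⬝ᵥ w) • u := by
  ext i
  simp [mulVec, vecMulVec_apply, dotProduct, Finset.mul_sum, mul_assoc, Finset.sum_mul,
    mul_comm, mul_left_comm]

/-- Step (a): some rank-one correction of `A` along `c` is invertible. -/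
lemma exists_ne_zero_det {n : ℕ} (A : Matrix (Fin n) (Fin n) ℝ) (b c : Fin n → ℝ) (d : ℝ)
    (hg : (blockMat A b c d).det ≠ 0) :
    ∃ u : Fin n → ℝ, (A - vecMulVec u c).det ≠ 0 := by
  by_cases hA : A.det = 0
  · -- A is singular, so mulVec is not surjective; pick u outside the range
    have hns : ¬ Function.Surjective A.mulVec := by
      rw [Matrix.mulVec_surjective_iff_isUnit]
      intro h
      have := (Matrix.isUnit_iff_isUnit_det A).mp h
      rw [isUnit_iff_ne_zero] at this
      exact this hA
    simp only [Function.Surjective, not_forall] at hns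
    obtain ⟨u, hu⟩ := hns
    push_neg at hu
    refine ⟨u, fun hdet => ?_⟩
    obtain ⟨y, hy0, hy⟩ := (Matrix.exists_mulVec_eq_zero_iff).mpr hdet
    have hAy : A.mulVec y = (c ⬝ᵥ y) • u := by
      rw [Matrix.sub_mulVec, vecMulVec_mulVec', sub_eq_zero] at hy
      exact hy
    by_cases hcy : c ⬝ᵥ y = 0
    · -- then (y, 0) is in the kernel of the whole matrix, contradiction
      rw [hcy, zero_smul] at hAy
      apply hg
      rw [← Matrix.exists_mulVec_eq_zero_iff]
      refine ⟨Sum.elim y 0, fun h => hy0 (funext fun i => congrFun h (Sum.inl i)), ?_⟩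
      · unfold blockMat
        erw [show (Sum.elim y (0 : Unit → ℝ)) = Sum.elim y (0 : Unit → ℝ) from rfl,
          Matrix.fromBlocks_mulVec]
        have h1 : (fun (_ : Unit) (j : Fin n) => c j) *ᵥ y = 0 := by
          ext i; simpa [mulVec, dotProduct] using hcy
        erw [mulVec_zero, mulVec_zero]
        simp [hAy, h1]
    · exact hu ((c ⬝ᵥ y)⁻¹ • y) (by rw [Matrix.mulVec_smul, hAy, smul_smul,
        inv_mul_cancel₀ hcy, one_smul])
  · refine ⟨0, ?_⟩
    have : vecMulVec (0 : Fin n → ℝ) c = 0 := by ext i j; simp [vecMulVec_apply]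
    rw [this, sub_zero]; exact hA

/-- Step (b): hit any nonzero target value for the determinant. -/
lemma exists_det_eq {n : ℕ} (A : Matrix (Fin n) (Fin n) ℝ) (c : Fin n → ℝ) (hc : c ≠ 0)
    (u₀ : Fin n → ℝ) (h0 : (A - vecMulVec u₀ c).det ≠ 0) (t : ℝ) (ht : t ≠ 0) :
    ∃ u : Fin n → ℝ, (A - vecMulVec u c).det = t := by
  set A' := A - vecMulVec u₀ c with hA'
  have hunit : IsUnit A'.det := isUnit_iff_ne_zero.mpr h0
  set r := c ᵥ* A'⁻¹ with hr
  have hr0 : r ≠ 0 := by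
    intro h
    apply hc
    have hcr : r ᵥ* A' = c := by
      rw [hr, Matrix.vecMul_vecMul, Matrix.nonsing_inv_mul A' hunit, Matrix.vecMul_one]
    rw [← hcr, h, Matrix.zero_vecMul]
  have hrr : r ⬝ᵥ r ≠ 0 := fun h => hr0 (dotProduct_self_eq_zero.mp h)
  set s := (1 - t / A'.det) / (r ⬝ᵥ r) with hs
  refine ⟨u₀ + s • r, ?_⟩
  have key : A - vecMulVec (u₀ + s • r) c = A' + replicateCol Unit (-(s • r)) * replicateRow Unit c := by
    rw [← vecMulVec_eq, hA']
    ext i j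
    simp [vecMulVec_apply, add_mul]
    ring
  have h11 : (1 + replicateRow Unit c * A'⁻¹ * replicateCol Unit (-(s • r))).det = 1 - s * (r ⬝ᵥ r) := by
    rw [← Matrix.replicateRow_vecMul, ← hr, det_unique]
    simp [Matrix.replicateRow_mul_replicateCol_apply, Matrix.one_apply, dotProduct_neg, dotProduct_smul,
      sub_eq_add_neg]
  rw [key, Matrix.det_add_replicateCol_mul_replicateRow hunit, h11, hs, div_mul_cancel₀ _ hrr]
  field_simp
  ring

/-- **Proposition 5.1, part 1.** Any invertible `g = [[A, b], [cᵀ, d]]` with `c ≠ 0` factors as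
`g = [[Iₙ + uvᵀ, u], [vᵀ, 1]] · [[A₁, b₁], [0, d₁]]` with `A₁` invertible and `d₁ > 0`. -/
theorem block_decomposition {n : ℕ} (hn : 1 ≤ n)
    (A : Matrix (Fin n) (Fin n) ℝ) (b c : Fin n → ℝ) (d : ℝ)
    (hg : (blockMat A b c d).det ≠ 0) (hc : c ≠ 0) :
    ∃ (u v b₁ : Fin n → ℝ) (A₁ : Matrix (Fin n) (Fin n) ℝ) (d₁ : ℝ),
      IsUnit A₁ ∧ 0 < d₁ ∧
      blockMat A b c d = blockMat (1 + vecMulVec u v) u v 1 * blockMat A₁ b₁ 0 d₁ := by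
  obtain ⟨u₀, hu₀⟩ := exists_ne_zero_det A b c d hg
  obtain ⟨u, hu⟩ := exists_det_eq A c hc u₀ hu₀ ((blockMat A b c d).det) hg
  set A₁ := A - vecMulVec u c with hA₁
  have hA₁det : A₁.det ≠ 0 := by rw [hu]; exact hg
  have hA₁unit : IsUnit A₁.det := isUnit_iff_ne_zero.mpr hA₁det
  set v := c ᵥ* A₁⁻¹ with hv
  have hvA : v ᵥ* A₁ = c := by
    rw [hv, Matrix.vecMul_vecMul, Matrix.nonsing_inv_mul A₁ hA₁unit, Matrix.vecMul_one]
  set b₁ := b - d • u with hb₁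
  set d₁ := d - v ⬝ᵥ b₁ with hd₁
  have key : blockMat A b c d = blockMat (1 + vecMulVec u v) u v 1 * blockMat A₁ b₁ 0 d₁ := by
    have hTL : (1 + vecMulVec u v) * A₁ + vecMulVec u (0 : Fin n → ℝ) = A := by
      rw [add_mul, one_mul, vecMulVec_mul', hvA]
      have h0 : vecMulVec u (0 : Fin n → ℝ) = 0 := by ext i j; simp [vecMulVec_apply]
      rw [h0, add_zero, hA₁, sub_add_cancel]
    have hTR : (1 + vecMulVec u v) *ᵥ b₁ + d₁ • u = b := by
      rw [Matrix.add_mulVec, Matrix.one_mulVec, vecMulVec_mulVec']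
      funext i
      simp [hb₁, hd₁]
      ring
    have hBL : A₁.vecMul v + (1 : ℝ) • (0 : Fin n → ℝ) = c := by
      rw [show A₁.vecMul v = v ᵥ* A₁ from rfl, hvA]; simp
    have hBR : v ⬝ᵥ b₁ + 1 * d₁ = d := by rw [hd₁]; ring
    rw [blockMat_mul, hTL, hTR, hBL, hBR]
  -- now compute d₁ via determinants
  have hdetL : (blockMat (1 + vecMulVec u v) u v 1).det = 1 := by
    rw [blockMat_eq_fromBlocks, one_smul, det_fromBlocks_one₂₂, ← vecMulVec_eq,
      add_sub_cancel_right, det_one]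
  have hdetR : (blockMat A₁ b₁ 0 d₁).det = A₁.det * d₁ := by
    rw [blockMat_eq_fromBlocks]
    have : replicateRow Unit (0 : Fin n → ℝ) = 0 := by ext i j; simp
    rw [this, Matrix.det_fromBlocks_zero₂₁, det_smul, det_one, mul_one]
    simp
  have hdet : (blockMat A b c d).det = (blockMat A b c d).det * d₁ := by
    conv_lhs => rw [key]
    rw [det_mul, hdetL, hdetR, hu, one_mul]
  have hd1 : d₁ = 1 := by
    have h := mul_left_cancel₀ hg (show (blockMat A b c d).det * 1
      = (blockMat A b c d).det * d₁ by rw [mul_one]; exact hdet)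
    exact h.symm
  exact ⟨u, v, b₁, A₁, d₁, (Matrix.isUnit_iff_isUnit_det A₁).mpr hA₁unit,
    by rw [hd1]; norm_num, key⟩
end

section
/- (Part of Theorem 5.4: the multinomial and negative multinomial classes are in the same G-orbit.) Let n ≥ 1, let 𝟙 ∈ ℝⁿ be the all-ones vector, and let g = [[Iₙ, 0], [𝟙ᵀ, 1]] ∈ GL(n+1, ℝ). Define V_II(m) = −mmᵀ + diag(m₁, …, mₙ) and V_III(m) = mmᵀ + diag(m₁, …, mₙ). Then for every m ∈ ℝⁿ with 𝟙ᵀm + 1 > 0: T_g(V_II)(m) = V_III(m). -/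
open Matrix

/-- The homography `h_g(x) = (Ax + b)/(cᵀx + d)` associated to the block matrix
`g = [[A, b], [cᵀ, d]]`. -/
noncomputable def homog {n : ℕ} (A : Matrix (Fin n) (Fin n) ℝ) (b c : Fin n → ℝ) (d : ℝ)
    (x : Fin n → ℝ) : Fin n → ℝ :=
  (c ⬝ᵥ x + d)⁻¹ • (A.mulVec x + b)

/-- The Jacobian matrix `h'_g(x) = (cᵀx + d)⁻² ((cᵀx + d)A − (Ax + b)cᵀ)`. -/
noncomputable def homogJac {n : ℕ} (A : Matrix (Fin n) (Fin n) ℝ) (b c : Fin n → ℝ) (d : ℝ)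
    (x : Fin n → ℝ) : Matrix (Fin n) (Fin n) ℝ :=
  ((c ⬝ᵥ x + d) ^ 2)⁻¹ • ((c ⬝ᵥ x + d) • A - vecMulVec (A.mulVec x + b) c)

/-- The transformation `T_g(V)(m) = (cᵀm + d)⁻¹ (h'_g(m))⁻¹ V(h_g(m)) ((h'_g(m))ᵀ)⁻¹`. -/
noncomputable def Tg {n : ℕ} (A : Matrix (Fin n) (Fin n) ℝ) (b c : Fin n → ℝ) (d : ℝ)
    (V : (Fin n → ℝ) → Matrix (Fin n) (Fin n) ℝ) (m : Fin n → ℝ) :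
    Matrix (Fin n) (Fin n) ℝ :=
  (c ⬝ᵥ m + d)⁻¹ •
    ((homogJac A b c d m)⁻¹ * V (homog A b c d m) * ((homogJac A b c d m)ᵀ)⁻¹)

section helpers

variable {n : ℕ}

lemma vmv_mul_vmv (a b c d : Fin n → ℝ) :
    vecMulVec a b * vecMulVec c d = (b ⬝ᵥ c) • vecMulVec a d := by
  ext i j
  simp only [mul_apply, vecMulVec_apply, Matrix.smul_apply, smul_eq_mul, dotProduct,
    Finset.sum_mul]
  apply Finset.sum_congr rfl
  intro k _
  ring

lemma vmv_mul_diag (a b v : Fin n → ℝ) :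
    vecMulVec a b * diagonal v = vecMulVec a (fun j => b j * v j) := by
  ext i j
  simp [mul_apply, vecMulVec_apply, diagonal_apply, mul_ite, Finset.sum_ite_eq]
  ring

lemma diag_mul_vmv (v a b : Fin n → ℝ) :
    diagonal v * vecMulVec a b = vecMulVec (fun i => v i * a i) b := by
  ext i j
  simp [mul_apply, vecMulVec_apply, diagonal_apply, ite_mul, Finset.sum_ite_eq]
  ring

lemma vmv_transpose (a b : Fin n → ℝ) : (vecMulVec a b)ᵀ = vecMulVec b a := by
  ext i j
  simp [vecMulVec_apply, mul_comm]

lemma smul_vmv (r : ℝ) (a b : Fin n → ℝ) :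
    vecMulVec (r • a) b = r • vecMulVec a b := by
  ext i j
  simp [vecMulVec_apply, mul_assoc]

lemma vmv_smul (r : ℝ) (a b : Fin n → ℝ) :
    vecMulVec a (r • b) = r • vecMulVec a b := by
  ext i j
  simp [vecMulVec_apply]
  ring

end helpers

/-- **Part of Theorem 5.4.** For `g = [[Iₙ, 0], [𝟙ᵀ, 1]]`, the multinomial variance function
`V_II(m) = −mmᵀ + diag(m)` is sent by `T_g` to the negative multinomial one
`V_III(m) = mmᵀ + diag(m)`. -/
theorem multinomial_negative_multinomial_same_orbit {n : ℕ} (hn : 1 ≤ n)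
    (m : Fin n → ℝ) (hm : 0 < (fun _ => (1 : ℝ)) ⬝ᵥ m + 1) :
    Tg 1 0 (fun _ => (1 : ℝ)) 1 (fun x => -vecMulVec x x + Matrix.diagonal x) m
      = vecMulVec m m + Matrix.diagonal m := by
  set t : ℝ := (fun _ => (1 : ℝ)) ⬝ᵥ m with ht
  set s : ℝ := t + 1 with hs
  have hs0 : s ≠ 0 := ne_of_gt hm
  set M : Matrix (Fin n) (Fin n) ℝ := vecMulVec m (fun _ => (1 : ℝ)) with hM
  set N : Matrix (Fin n) (Fin n) ℝ := vecMulVec (fun _ => (1 : ℝ)) m with hN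
  set W : Matrix (Fin n) (Fin n) ℝ := vecMulVec m m with hW
  set D : Matrix (Fin n) (Fin n) ℝ := diagonal m with hD
  have hMM : M * M = t • M := by
    rw [hM, vmv_mul_vmv]
  -- the Jacobian
  have hJ : homogJac 1 0 (fun _ => (1 : ℝ)) 1 m = (s ^ 2)⁻¹ • (s • 1 - M) := by
    simp [homogJac, hM, hs, ht, Matrix.one_mulVec]
  -- its inverse
  have hkey : (s : ℝ) • (1 : Matrix (Fin n) (Fin n) ℝ) + s • M - (M + t • M)
      = s • 1 := by
    rw [hs]; module
  have hs2 : (s ^ 2)⁻¹ * s * s = 1 := by field_simp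
  have hprod : ((s ^ 2)⁻¹ • (s • 1 - M)) * (s • (1 + M)) = 1 := by
    rw [Matrix.smul_mul, Matrix.mul_smul, sub_mul, mul_add, mul_add, Matrix.smul_mul,
      Matrix.smul_mul, mul_one, one_mul, mul_one, hMM, hkey, smul_smul, smul_smul, hs2]
    simp
  have hJinv : (homogJac 1 0 (fun _ => (1 : ℝ)) 1 m)⁻¹ = s • (1 + M) := by
    rw [hJ]; exact inv_eq_right_inv hprod
  have hJTinv : ((homogJac 1 0 (fun _ => (1 : ℝ)) 1 m)ᵀ)⁻¹ = s • (1 + N) := by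
    rw [← transpose_nonsing_inv, hJinv, transpose_smul, transpose_add, transpose_one,
      hM, hN, vmv_transpose]
  -- the homography image
  have hhom : homog 1 0 (fun _ => (1 : ℝ)) 1 m = s⁻¹ • m := by
    simp [homog, hs, ht, Matrix.one_mulVec]
  -- value of V at the image
  have hV : -vecMulVec (s⁻¹ • m) (s⁻¹ • m) + diagonal (s⁻¹ • m)
      = (-(s⁻¹ * s⁻¹)) • W + s⁻¹ • D := by
    rw [smul_vmv, vmv_smul, diagonal_smul, smul_smul, hW, hD]
    match_scalars <;> ring
  -- auxiliary products
  have hMW : M * W = t • W := by rw [hM, hW, vmv_mul_vmv, ht]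
  have hWN : W * N = t • W := by
    rw [hW, hN, vmv_mul_vmv]
    congr 1
    rw [ht]; simp [dotProduct, mul_comm]
  have hMD : M * D = W := by
    rw [hM, hD, hW, vmv_mul_diag]; simp
  have hDN : D * N = W := by
    rw [hD, hN, hW, diag_mul_vmv]; simp
  -- main computation
  rw [Tg, hJinv, hJTinv, hhom]
  show s⁻¹ • (s • (1 + M) * ((-vecMulVec (s⁻¹ • m) (s⁻¹ • m)) + diagonal (s⁻¹ • m))
      * (s • (1 + N))) = W + D
  rw [hV]
  simp only [Matrix.smul_mul, Matrix.mul_smul, mul_add, add_mul, one_mul, mul_one,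
    hMW, hMD, hWN, hDN, hMM]
  have hts : t = s - 1 := by rw [hs]; ring
  rw [hts]
  match_scalars <;> field_simp <;> ring
end
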